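/- arXiv:1104.2054 — 6 statements merged into one kernel-verified Lean document; each statement's English description precedes it below -/
import Mathlib

section
/- If G is a non-abelian subgroup of H(n,ℂ) containing some element with linear part λ with |λ| ≠ 1, then 0 lies in the closure of Λ_G ⊆ ℂ. -/
/-- If G is a non-abelian subgroup of H(n,ℂ) containing some element with linear part λ
with |λ| ≠ 1, then 0 lies in the closure of Λ_G ⊆ ℂ. -/
theorem stmt3 {n : ℕ} (G : Subgroup ((Fin n → ℂ) ≃ᵃ[ℂ] (Fin n → ℂ)))
    (hG : ∀ f ∈ G, ∃ (l : ℂ) (c : Fin n → ℂ), l ≠ 0 ∧ ∀ z, f z = l • z + c)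
    (hna : ∃ f ∈ G, ∃ g ∈ G, f * g ≠ g * f)
    (hex : ∃ f ∈ G, ∃ (l : ℂ) (c : Fin n → ℂ),
      (∀ z, f z = l • z + c) ∧ ‖l‖ ≠ 1) :
    (0 : ℂ) ∈ closure {l : ℂ | ∃ f ∈ G, ∃ c : Fin n → ℂ, ∀ z : Fin n → ℂ, f z = l • z + c} := by
  set S := {l : ℂ | ∃ f ∈ G, ∃ c : Fin n → ℂ, ∀ z : Fin n → ℂ, f z = l • z + c} with hS
  obtain ⟨f, hfG, l, c, hf, habs⟩ := hex
  by_cases hl0 : l = 0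
  · apply subset_closure
    exact ⟨f, hfG, c, by simpa [hl0] using hf⟩
  -- S is closed under multiplication
  have hmul : ∀ l1 ∈ S, ∀ l2 ∈ S, l1 * l2 ∈ S := by
    rintro l1 ⟨f1, hf1G, c1, hf1⟩ l2 ⟨f2, hf2G, c2, hf2⟩
    refine ⟨f1 * f2, mul_mem hf1G hf2G, l1 • c2 + c1, fun z => ?_⟩
    have : (f1 * f2) z = f1 (f2 z) := rfl
    rw [this, hf2, hf1, smul_add, smul_smul]
    ring_nf
  -- S is closed under inverses of nonzero elements
  have hinv : ∀ m ∈ S, m ≠ 0 → m⁻¹ ∈ S := by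
    rintro m ⟨g, hgG, d, hg⟩ hm
    refine ⟨g⁻¹, inv_mem hgG, -(m⁻¹ • d), fun z => ?_⟩
    have key : g (m⁻¹ • z + -(m⁻¹ • d)) = z := by
      rw [hg, smul_add, smul_smul, mul_inv_cancel₀ hm, one_smul, smul_neg, smul_smul,
        mul_inv_cancel₀ hm, one_smul]
      abel
    have : (g⁻¹ : (Fin n → ℂ) ≃ᵃ[ℂ] (Fin n → ℂ)) (g (m⁻¹ • z + -(m⁻¹ • d)))
        = m⁻¹ • z + -(m⁻¹ • d) := g.symm_apply_apply _
    rw [key] at this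
    exact this
  have hlS : l ∈ S := ⟨f, hfG, c, hf⟩
  -- pick μ with |μ| < 1
  obtain ⟨μ, hμS, hμ⟩ : ∃ μ ∈ S, ‖μ‖ < 1 := by
    rcases lt_or_gt_of_ne habs with h | h
    · exact ⟨l, hlS, h⟩
    · refine ⟨l⁻¹, hinv l hlS hl0, ?_⟩
      rw [norm_inv]
      exact inv_lt_one_of_one_lt₀ h
  have hpow : ∀ k : ℕ, μ ^ (k + 1) ∈ S := by
    intro k
    induction k with
    | zero => simpa using hμS
    | succ k ih => rw [pow_succ]; exact hmul _ ih _ hμS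
  have htend : Filter.Tendsto (fun k : ℕ => μ ^ (k + 1)) Filter.atTop (nhds 0) :=
    (tendsto_pow_atTop_nhds_zero_of_norm_lt_one hμ).comp (Filter.tendsto_add_atTop_nat 1)
  exact mem_closure_of_tendsto htend (Filter.Eventually.of_forall hpow)
end

section
/- If G is a non-abelian subgroup of H(n,ℂ), then there exist f, g ∈ G, neither of which is a translation, with distinct fixed points (centers). -/
private lemma aux5 {n : ℕ} (G : Subgroup ((Fin n → ℂ) ≃ᵃ[ℂ] (Fin n → ℂ)))
    (f g : (Fin n → ℂ) ≃ᵃ[ℂ] (Fin n → ℂ)) (hf : f ∈ G) (hg : g ∈ G)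
    (c d : Fin n → ℂ) (m : ℂ) (hm : m ≠ 1) (hc : c ≠ 0)
    (hfz : ∀ z, f z = z + c) (hgz : ∀ z, g z = m • z + d) :
    ∃ f ∈ G, ∃ g ∈ G, ∃ (a b : Fin n → ℂ) (l m : ℂ), l ≠ 1 ∧ m ≠ 1 ∧
      (∀ z, f z = l • (z - a) + a) ∧ (∀ z, g z = m • (z - b) + b) ∧ a ≠ b := by
  have hm0 : (1 - m) ≠ 0 := sub_ne_zero.mpr (Ne.symm hm)
  have hsymm : ∀ z, f.symm z = z - c := by
    intro z
    apply f.injective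
    rw [f.apply_symm_apply, hfz, sub_add_cancel]
  set b : Fin n → ℂ := (1 - m)⁻¹ • d with hb
  have hdb : (1 - m) • b = d := by
    rw [hb, smul_smul, mul_inv_cancel₀ hm0, one_smul]
  refine ⟨g, hg, f * g * f⁻¹, G.mul_mem (G.mul_mem hf hg) (G.inv_mem hf),
    b, b + c, m, m, hm, hm, ?_, ?_, ?_⟩
  · intro z
    rw [hgz, ← hdb]; module
  · intro z
    have h1 : (f * g * f⁻¹) z = f (g (f.symm z)) := by
      simp [AffineEquiv.mul_def, AffineEquiv.inv_def]
    rw [h1, hsymm, hgz, hfz, ← hdb]; module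
  · intro h
    exact hc (by linear_combination (norm := module) h.symm)

/-- If G is a non-abelian subgroup of H(n,ℂ), then there exist f, g ∈ G, neither of
which is a translation, with distinct centers. -/
theorem stmt5 {n : ℕ} (G : Subgroup ((Fin n → ℂ) ≃ᵃ[ℂ] (Fin n → ℂ)))
    (hG : ∀ f ∈ G, ∃ (l : ℂ) (c : Fin n → ℂ), l ≠ 0 ∧ ∀ z, f z = l • z + c)
    (hna : ∃ f ∈ G, ∃ g ∈ G, f * g ≠ g * f) :
    ∃ f ∈ G, ∃ g ∈ G, ∃ (a b : Fin n → ℂ) (l m : ℂ), l ≠ 1 ∧ m ≠ 1 ∧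
      (∀ z, f z = l • (z - a) + a) ∧ (∀ z, g z = m • (z - b) + b) ∧ a ≠ b := by
  obtain ⟨f, hf, g, hg, hne⟩ := hna
  obtain ⟨l, c, hl0, hfz⟩ := hG f hf
  obtain ⟨m, d, hm0, hgz⟩ := hG g hg
  have key : l • d + c ≠ m • c + d := by
    intro h
    apply hne
    ext z
    have h1 : (f * g) z = f (g z) := by simp [AffineEquiv.mul_def]
    have h2 : (g * f) z = g (f z) := by simp [AffineEquiv.mul_def]
    rw [h1, h2, hfz, hgz, hfz, hgz, smul_add, smul_add, smul_smul, smul_smul,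
      mul_comm m l]
    rw [add_assoc, add_assoc, h]
  by_cases hl1 : l = 1
  · subst hl1
    rw [one_smul] at key
    have hm1 : m ≠ 1 := by rintro rfl; exact key (by module)
    have hc : c ≠ 0 := by rintro rfl; exact key (by module)
    have hfz' : ∀ z, f z = z + c := by intro z; rw [hfz, one_smul]
    exact aux5 G f g hf hg c d m hm1 hc hfz' hgz
  · by_cases hm1 : m = 1
    · subst hm1
      rw [one_smul] at key
      have hd : d ≠ 0 := by rintro rfl; exact key (by module)
      have hgz' : ∀ z, g z = z + d := by intro z; rw [hgz, one_smul]
      exact aux5 G g f hg hf d c l hl1 hd hgz' hfz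
    · have hl0' : (1 - l) ≠ 0 := sub_ne_zero.mpr (Ne.symm hl1)
      have hm0' : (1 - m) ≠ 0 := sub_ne_zero.mpr (Ne.symm hm1)
      set a : Fin n → ℂ := (1 - l)⁻¹ • c with ha
      set b : Fin n → ℂ := (1 - m)⁻¹ • d with hb
      have hca : (1 - l) • a = c := by
        rw [ha, smul_smul, mul_inv_cancel₀ hl0', one_smul]
      have hdb : (1 - m) • b = d := by
        rw [hb, smul_smul, mul_inv_cancel₀ hm0', one_smul]
      refine ⟨f, hf, g, hg, a, b, l, m, hl1, hm1, ?_, ?_, ?_⟩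
      · intro z
        rw [hfz, ← hca]; module
      · intro z
        rw [hgz, ← hdb]; module
      · intro hab
        apply key
        rw [← hca, ← hdb, ← hab]
        module
end

section
/- Let λ ∈ ℂ with |λ| > 1 (or |λ| < 1), λ ∉ ℝ, a ≠ b in ℂ, and let G be the group generated by f(z) = λ(z−a)+a and g(z) = λ(z−b)+b. Then the subgroup of translations contained in G has dense orbit of 0 in ℂ(b−a): the closure of {T(0) : T ∈ G, T a translation} equals ℂ(b−a). -/
open Complex

lemma dense_aux (μ c : ℂ) (hμ : μ.im ≠ 0) (hμ1 : ‖μ‖ < 1) (hc : c ≠ 0)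
    (S : AddSubgroup ℂ) (hS : ∀ n : ℕ, μ ^ n * c ∈ S) : Dense (S : Set ℂ) := by
  rw [Metric.dense_iff]
  intro w ε hε
  have hμ0 : μ ≠ 0 := fun h => hμ (by simp [h])
  obtain ⟨n, hn⟩ : ∃ n : ℕ, (‖μ‖) ^ n * ((1 + ‖μ‖) * ‖c‖) < ε := by
    have h := tendsto_pow_atTop_nhds_zero_of_lt_one (norm_nonneg μ) hμ1
    have h2 := h.mul_const ((1 + ‖μ‖) * ‖c‖)
    rw [zero_mul] at h2
    exact (h2.eventually (gt_mem_nhds hε)).exists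
  set u : ℂ := w / (μ ^ n * c) with hu
  set t : ℝ := u.im / μ.im with ht
  set s : ℝ := u.re - t * μ.re with hs
  have hust : (s : ℂ) + (t : ℂ) * μ = u := by
    apply Complex.ext
    · simp [hs]
    · simp [ht]; field_simp
  have hw : w = ((s : ℂ) + (t : ℂ) * μ) * (μ ^ n * c) := by
    rw [hust, hu]
    field_simp
  set m : ℤ := ⌊s⌋ with hm
  set k : ℤ := ⌊t⌋ with hk
  refine ⟨(m : ℂ) * (μ ^ n * c) + (k : ℂ) * (μ ^ (n + 1) * c), Metric.mem_ball.2 ?_, ?_⟩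
  · have hdiff : (m : ℂ) * (μ ^ n * c) + (k : ℂ) * (μ ^ (n + 1) * c) - w
        = (((m : ℂ) - s) + ((k : ℂ) - t) * μ) * (μ ^ n * c) := by
      rw [hw]; ring
    rw [Complex.dist_eq, hdiff]
    have hb1 : ‖((m : ℂ) - s) + ((k : ℂ) - t) * μ‖ ≤ 1 + ‖μ‖ := by
      refine (norm_add_le _ _).trans ?_
      have e1 : ((m : ℂ) - s) = ((m - s : ℝ) : ℂ) := by push_cast; ring
      have e2 : ((k : ℂ) - t) = ((k - t : ℝ) : ℂ) := by push_cast; ring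
      rw [e1, norm_mul, e2, Complex.norm_real, Complex.norm_real, Real.norm_eq_abs, Real.norm_eq_abs]
      have h1 : |(m : ℝ) - s| ≤ 1 := by
        rw [abs_le]
        constructor <;> linarith [Int.floor_le s, Int.lt_floor_add_one s]
      have h2 : |(k : ℝ) - t| ≤ 1 := by
        rw [abs_le]
        constructor <;> linarith [Int.floor_le t, Int.lt_floor_add_one t]
      have := norm_nonneg μ
      nlinarith
    calc ‖(((m : ℂ) - s) + ((k : ℂ) - t) * μ) * (μ ^ n * c)‖
        ≤ (1 + ‖μ‖) * (‖μ‖ ^ n * ‖c‖) := by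
          rw [norm_mul, norm_mul, norm_pow]
          exact mul_le_mul_of_nonneg_right hb1 (by positivity)
      _ = (‖μ‖) ^ n * ((1 + ‖μ‖) * ‖c‖) := by ring
      _ < ε := hn
  · refine S.add_mem ?_ ?_
    · simpa [zsmul_eq_mul] using S.zsmul_mem (hS n) m
    · simpa [zsmul_eq_mul] using S.zsmul_mem (hS (n + 1)) k

/-- Let |λ| ≠ 1, λ ∉ ℝ, a ≠ b in ℂ, and G the group generated by f(z) = λ(z−a)+a and
g(z) = λ(z−b)+b. Then the set G₁(0) of translation vectors occurring in G has closure
equal to the real plane ℂ(b−a). -/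
theorem stmt11 (lam : ℂ) (habs : ‖lam‖ ≠ 1) (him : lam.im ≠ 0)
    (a b : ℂ) (hab : a ≠ b) (f g : ℂ ≃ᵃ[ℂ] ℂ)
    (hf : ∀ z, f z = lam * (z - a) + a) (hg : ∀ z, g z = lam * (z - b) + b) :
    closure {c : ℂ | ∃ T ∈ Subgroup.closure {f, g}, ∀ z : ℂ, T z = z + c}
      = {w : ℂ | ∃ α : ℂ, w = α * (b - a)} := by
  have hlam0 : lam ≠ 0 := fun h => him (by simp [h])
  have hlam1 : lam ≠ 1 := fun h => him (by simp [h])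
  -- the set of translation vectors is an additive subgroup
  set S : AddSubgroup ℂ :=
    { carrier := {c : ℂ | ∃ T ∈ Subgroup.closure {f, g}, ∀ z : ℂ, T z = z + c}
      zero_mem' := ⟨1, Subgroup.one_mem _, fun z => by simp⟩
      add_mem' := by
        rintro c₁ c₂ ⟨T₁, hT₁, h₁⟩ ⟨T₂, hT₂, h₂⟩
        exact ⟨T₁ * T₂, mul_mem hT₁ hT₂, fun z => by
          simp only [AffineEquiv.coe_mul, Function.comp_apply, h₂, h₁]; ring⟩
      neg_mem' := by
        rintro c ⟨T, hT, h⟩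
        refine ⟨T⁻¹, inv_mem hT, fun z => ?_⟩
        apply T.injective
        rw [show T (T⁻¹ z) = (T * T⁻¹) z from rfl, mul_inv_cancel, h]
        simp } with hSdef
  -- membership facts
  have hfmem : f ∈ Subgroup.closure ({f, g} : Set (ℂ ≃ᵃ[ℂ] ℂ)) :=
    Subgroup.subset_closure (by simp)
  have hgmem : g ∈ Subgroup.closure ({f, g} : Set (ℂ ≃ᵃ[ℂ] ℂ)) :=
    Subgroup.subset_closure (by simp)
  have hfsymm : ∀ z, f⁻¹ z = (z - a) / lam + a := by
    intro z
    apply f.injective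
    rw [show f (f⁻¹ z) = (f * f⁻¹) z from rfl, mul_inv_cancel, hf]
    field_simp
    ring
    rfl
  -- base translation
  have hbase : (b - a) * (1 - lam) ∈ S := by
    refine ⟨g * f⁻¹, mul_mem hgmem (inv_mem hfmem), fun z => ?_⟩
    rw [AffineEquiv.coe_mul, Function.comp_apply, hg, hfsymm]
    field_simp
    ring
  -- conjugation steps
  have hstep : ∀ c ∈ S, lam * c ∈ S := by
    rintro c ⟨T, hT, h⟩
    refine ⟨f * T * f⁻¹, mul_mem (mul_mem hfmem hT) (inv_mem hfmem), fun z => ?_⟩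
    have : (f * T * f⁻¹) z = f (T (f⁻¹ z)) := rfl
    rw [this, h, hf, hfsymm]
    field_simp
    ring
  have hstepinv : ∀ c ∈ S, lam⁻¹ * c ∈ S := by
    rintro c ⟨T, hT, h⟩
    refine ⟨f⁻¹ * T * f, mul_mem (mul_mem (inv_mem hfmem) hT) hfmem, fun z => ?_⟩
    have : (f⁻¹ * T * f) z = f⁻¹ (T (f z)) := rfl
    rw [this, h, hfsymm, hf]
    field_simp
    ring
  have hc₀ : (b - a) * (1 - lam) ≠ 0 :=
    mul_ne_zero (sub_ne_zero.2 hab.symm) (sub_ne_zero.2 fun h => hlam1 h.symm)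
  -- density
  have hdense : Dense (S : Set ℂ) := by
    rcases lt_or_gt_of_ne habs with h1 | h1
    · refine dense_aux lam ((b - a) * (1 - lam)) him h1 hc₀ S ?_
      intro n
      induction n with
      | zero => simpa using hbase
      | succ n ih => rw [pow_succ, mul_comm (lam ^ n) lam, mul_assoc]; exact hstep _ ih
    · have hinvim : (lam⁻¹).im ≠ 0 := by
        rw [Complex.inv_im]
        simp only [neg_div, neg_ne_zero]
        exact div_ne_zero him (fun h => hlam0 (Complex.normSq_eq_zero.1 h))
      have hinvabs : ‖lam⁻¹‖ < 1 := by
        rw [norm_inv]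
        exact inv_lt_one_of_one_lt₀ h1
      refine dense_aux lam⁻¹ ((b - a) * (1 - lam)) hinvim hinvabs hc₀ S ?_
      intro n
      induction n with
      | zero => simpa using hbase
      | succ n ih => rw [pow_succ, mul_comm (lam⁻¹ ^ n) lam⁻¹, mul_assoc]; exact hstepinv _ ih
  have h1 : closure (S : Set ℂ) = Set.univ := hdense.closure_eq
  have h2 : {w : ℂ | ∃ α : ℂ, w = α * (b - a)} = Set.univ := by
    ext w
    simp only [Set.mem_setOf_eq, Set.mem_univ, iff_true]
    exact ⟨w / (b - a), (div_mul_cancel₀ w (sub_ne_zero.2 hab.symm)).symm⟩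
  calc closure {c : ℂ | ∃ T ∈ Subgroup.closure {f, g}, ∀ z : ℂ, T z = z + c}
      = closure (S : Set ℂ) := rfl
    _ = Set.univ := h1
    _ = {w : ℂ | ∃ α : ℂ, w = α * (b - a)} := h2.symm
end

section
/- Let θ ∈ ℝ with θ/π irrational, a ≠ b in ℂ, and let G be the group generated by the rotation-type maps f(z) = e^{iθ}(z−a)+a and g(z) = e^{iθ}(z−b)+b. Then the orbit G(a) = {h(a) : h ∈ G} is dense in ℂ (after identifying the affine line through a, b with ℂ). -/
open Complex

/-- The subgroup of ℝ generated by θ and 2π is dense when θ/π is irrational. -/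
lemma aux_denseH (θ : ℝ) (hθ : Irrational (θ / Real.pi)) :
    Dense (AddSubgroup.closure ({θ, 2 * Real.pi} : Set ℝ) : Set ℝ) := by
  rcases AddSubgroup.dense_or_cyclic (AddSubgroup.closure {θ, 2 * Real.pi}) with h | ⟨d, hd⟩
  · exact h
  · exfalso
    have h1 : θ ∈ AddSubgroup.closure ({θ, 2 * Real.pi} : Set ℝ) :=
      AddSubgroup.subset_closure (by simp)
    have h2 : 2 * Real.pi ∈ AddSubgroup.closure ({θ, 2 * Real.pi} : Set ℝ) :=
      AddSubgroup.subset_closure (by simp)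
    rw [hd, AddSubgroup.mem_closure_singleton] at h1 h2
    obtain ⟨m, hm⟩ := h1
    obtain ⟨k, hk⟩ := h2
    have hπ : Real.pi ≠ 0 := Real.pi_ne_zero
    have hzsmul : ∀ (n : ℤ) (x : ℝ), n • x = (n : ℝ) * x := fun n x => zsmul_eq_mul x n
    rw [hzsmul] at hm hk
    have hk0 : (k : ℝ) ≠ 0 := by
      rintro h0
      rw [h0, zero_mul] at hk
      exact (by positivity : (0:ℝ) < 2 * Real.pi).ne' hk.symm
    refine hθ ⟨(2 * m / k : ℚ), ?_⟩
    push_cast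
    rw [div_eq_div_iff hk0 hπ]
    -- 2 * m * π = θ * k
    have : θ * k = (m : ℝ) * (2 * Real.pi) := by rw [← hm, ← hk]; ring
    linarith [this]

/-- The additive subgroup generated by the α^n v is dense, α = e^{iθ}. -/
lemma aux_denseT (θ : ℝ) (hθ : Irrational (θ / Real.pi)) (v : ℂ) (hv : v ≠ 0) :
    Dense (AddSubgroup.closure
      (Set.range fun n : ℤ => Complex.exp (θ * Complex.I) ^ n * v) : Set ℂ) := by
  set α : ℂ := Complex.exp (θ * Complex.I) with hα
  have hαne : α ≠ 0 := Complex.exp_ne_zero _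
  set T' : AddSubgroup ℂ := AddSubgroup.closure (Set.range fun n : ℤ => α ^ n * v) with hT'
  set C : Set ℂ := closure (T' : Set ℂ) with hC
  have hCgrp : ((T'.topologicalClosure : AddSubgroup ℂ) : Set ℂ) = C := rfl
  have hadd : ∀ x ∈ C, ∀ y ∈ C, x + y ∈ C := fun x hx y hy =>
    T'.topologicalClosure.add_mem hx hy
  have hnsmul : ∀ x ∈ C, ∀ n : ℕ, (n : ℂ) * x ∈ C := by
    intro x hx n
    have := T'.topologicalClosure.nsmul_mem hx n
    have h' : (n : ℂ) * x ∈ T'.topologicalClosure := by simpa [nsmul_eq_mul] using this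
    exact h'
  -- multiplication by α^m preserves C
  have hmul : ∀ (m : ℤ), ∀ x ∈ C, α ^ m * x ∈ C := by
    intro m x hx
    have hmap : Set.MapsTo (fun y : ℂ => α ^ m * y) (T' : Set ℂ) (T' : Set ℂ) := by
      intro y hy
      have hle : T' ≤ AddSubgroup.comap (AddMonoidHom.mulLeft (α ^ m)) T' := by
        rw [hT']
        refine AddSubgroup.closure_le _ |>.mpr ?_
        rintro _ ⟨n, rfl⟩
        refine AddSubgroup.subset_closure ⟨m + n, ?_⟩
        simp [zpow_add₀ hαne, mul_assoc]
      exact hle hy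
    exact map_mem_closure (by fun_prop) hx hmap
  -- rotation invariance
  have hrot : ∀ x ∈ C, ∀ r : ℝ, Complex.exp (r * Complex.I) * x ∈ C := by
    intro x hx r
    set Sx : Set ℝ := {s : ℝ | Complex.exp (s * Complex.I) * x ∈ C} with hSx
    have hclosed : IsClosed Sx := by
      have : Continuous fun s : ℝ => Complex.exp (s * Complex.I) * x := by fun_prop
      exact IsClosed.preimage this isClosed_closure
    have hsub : (AddSubgroup.closure ({θ, 2 * Real.pi} : Set ℝ) : Set ℝ) ⊆ Sx := by
      intro s hs
      rw [SetLike.mem_coe, AddSubgroup.mem_closure_pair] at hs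
      obtain ⟨m, k, hmk⟩ := hs
      have : Complex.exp ((s : ℂ) * Complex.I) = α ^ m := by
        rw [← hmk]
        push_cast [zsmul_eq_mul]
        rw [add_mul, Complex.exp_add]
        have e1 : ((m : ℂ) * θ) * Complex.I = (m : ℂ) * (θ * Complex.I) := by ring
        have e2 : ((k : ℂ) * (2 * Real.pi)) * Complex.I
            = (k : ℂ) * (2 * Real.pi * Complex.I) := by ring
        rw [e1, e2, Complex.exp_int_mul, Complex.exp_int_mul, Complex.exp_two_pi_mul_I,
          one_zpow, mul_one]
      rw [hSx, Set.mem_setOf_eq, this]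
      exact hmul m x hx
    have hdense := aux_denseH θ hθ
    have : (Set.univ : Set ℝ) ⊆ Sx := by
      rw [← hdense.closure_eq]
      exact closure_minimal hsub hclosed
    exact this (Set.mem_univ r)
  -- real scalar multiplication with small scalars
  have hsmul2 : ∀ x ∈ C, ∀ r : ℝ, |r| ≤ 2 → (r : ℂ) * x ∈ C := by
    intro x hx r hr
    set φ : ℝ := Real.arccos (r / 2) with hφ
    have h1 : -1 ≤ r / 2 := by rw [abs_le] at hr; linarith [hr.1]
    have h2 : r / 2 ≤ 1 := by rw [abs_le] at hr; linarith [hr.2]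
    have hcos : Real.cos φ = r / 2 := Real.cos_arccos h1 h2
    have h2c := Complex.two_cos (x := (φ : ℂ))
    rw [← Complex.ofReal_cos, hcos] at h2c
    have hkey : (r : ℂ) = Complex.exp (φ * Complex.I) + Complex.exp (((-φ : ℝ) : ℂ) * Complex.I) := by
      push_cast
      rw [← h2c]
      push_cast
      ring
    rw [hkey, add_mul]
    exact hadd _ (hrot x hx φ) _ (hrot x hx (-φ))
  -- all real scalars
  have hsmul : ∀ x ∈ C, ∀ r : ℝ, (r : ℂ) * x ∈ C := by
    intro x hx r
    set n : ℕ := ⌈|r|⌉₊ + 1 with hn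
    have hn0 : (0 : ℝ) < n := by positivity
    have hrn : |r / n| ≤ 2 := by
      rw [abs_div, abs_of_pos hn0, div_le_iff₀ hn0]
      have : |r| ≤ n := le_trans (Nat.le_ceil _) (by push_cast [hn]; linarith)
      linarith
    have h1 : ((r / n : ℝ) : ℂ) * x ∈ C := hsmul2 x hx _ hrn
    have h2 : (n : ℂ) * (((r / n : ℝ) : ℂ) * x) ∈ C := hnsmul _ h1 n
    have hne' : (n : ℂ) ≠ 0 := Nat.cast_ne_zero.mpr (by omega)
    have hcast : ((r / n : ℝ) : ℂ) = (r : ℂ) / (n : ℂ) := by push_cast; ring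
    have heq : (n : ℂ) * ((r / n : ℝ) : ℂ) = (r : ℂ) := by
      rw [hcast, mul_comm, div_mul_cancel₀ _ hne']
    rw [← mul_assoc, heq] at h2
    exact h2
  -- conclude
  rw [dense_iff_closure_eq]
  ext w
  simp only [Set.mem_univ, iff_true]
  have hvC : v ∈ C := subset_closure (by
    refine AddSubgroup.subset_closure ⟨0, ?_⟩
    simp)
  have hIvC : Complex.I * v ∈ C := by
    have := hrot v hvC (Real.pi / 2)
    have heq : Complex.exp ((Real.pi / 2 : ℝ) * Complex.I) = Complex.I := by
      rw [Complex.exp_mul_I, ← Complex.ofReal_cos, ← Complex.ofReal_sin,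
        Real.cos_pi_div_two, Real.sin_pi_div_two]
      simp
    rwa [heq] at this
  have hdiv : w / v * v = w := div_mul_cancel₀ w hv
  have hw : ((w / v).re : ℂ) * v + ((w / v).im : ℂ) * (Complex.I * v) = w := by
    calc ((w / v).re : ℂ) * v + ((w / v).im : ℂ) * (Complex.I * v)
        = (((w / v).re : ℂ) + ((w / v).im : ℂ) * Complex.I) * v := by ring
      _ = w / v * v := by rw [Complex.re_add_im]
      _ = w := hdiv
  rw [← hw]
  exact hadd _ (hsmul v hvC _) _ (hsmul _ hIvC _)

/-- Let θ/π be irrational, a ≠ b in ℂ, and G the group generated by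
f(z) = e^{iθ}(z−a)+a and g(z) = e^{iθ}(z−b)+b. Then the orbit G(a) is dense in ℂ. -/
theorem stmt12 (θ : ℝ) (hθ : Irrational (θ / Real.pi)) (a b : ℂ) (hab : a ≠ b)
    (f g : ℂ ≃ᵃ[ℂ] ℂ)
    (hf : ∀ z, f z = Complex.exp (θ * Complex.I) * (z - a) + a)
    (hg : ∀ z, g z = Complex.exp (θ * Complex.I) * (z - b) + b) :
    Dense {w : ℂ | ∃ h ∈ Subgroup.closure {f, g}, h a = w} := by
  set α : ℂ := Complex.exp (θ * Complex.I) with hα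
  have hαne : α ≠ 0 := Complex.exp_ne_zero _
  have hα1 : α ≠ 1 := by
    intro h
    rw [hα, Complex.exp_eq_one_iff] at h
    obtain ⟨n, hn⟩ := h
    have hI : (Complex.I : ℂ) ≠ 0 := Complex.I_ne_zero
    have hn' : (θ : ℂ) * Complex.I = ((n : ℂ) * (2 * Real.pi)) * Complex.I := by
      rw [hn]; ring
    have hθc : (θ : ℂ) = (n : ℂ) * (2 * Real.pi) := mul_right_cancel₀ hI hn'
    have hθr : θ = (n : ℝ) * (2 * Real.pi) := by exact_mod_cast hθc
    refine hθ ⟨(2 * n : ℚ), ?_⟩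
    have hπ : Real.pi ≠ 0 := Real.pi_ne_zero
    push_cast
    rw [eq_div_iff hπ, hθr]
    ring
  set v : ℂ := (α - 1) * (a - b) with hv
  have hvne : v ≠ 0 := mul_ne_zero (sub_ne_zero.2 hα1) (sub_ne_zero.2 hab)
  have hfinv : ∀ z : ℂ, f.symm z = α⁻¹ * (z - a) + a := by
    intro z
    apply f.injective
    rw [f.apply_symm_apply, hf]
    field_simp
    ring
  have happ : ∀ (e e' : ℂ ≃ᵃ[ℂ] ℂ) (z : ℂ), (e * e') z = e (e' z) := fun _ _ _ => rfl
  have hfz : ∀ (n : ℤ) (z : ℂ), (f ^ n) z = α ^ n * (z - a) + a := by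
    intro n
    induction n using Int.induction_on with
    | zero => intro z; simp
    | succ k ih =>
      intro z
      rw [zpow_add_one, happ, hf z, ih, zpow_add_one₀ hαne]
      ring
    | pred k ih =>
      intro z
      rw [zpow_sub_one, happ, AffineEquiv.inv_def, hfinv z, ih, zpow_sub_one₀ hαne]
      field_simp
      ring
  set Gc := Subgroup.closure ({f, g} : Set (ℂ ≃ᵃ[ℂ] ℂ)) with hGc
  have hfm : f ∈ Gc := Subgroup.subset_closure (by simp)
  have hgm : g ∈ Gc := Subgroup.subset_closure (by simp)
  have hgen : ∀ n : ℤ, ∃ h ∈ Gc, ∀ z : ℂ, h z = z + α ^ n * v := by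
    intro n
    refine ⟨f ^ n * g * f⁻¹ * f ^ (-n), ?_, ?_⟩
    · exact mul_mem (mul_mem (mul_mem (zpow_mem hfm n) hgm) (inv_mem hfm)) (zpow_mem hfm (-n))
    · intro z
      have e1 : (f ^ n * g * f⁻¹ * f ^ (-n)) z = (f ^ n) (g (f⁻¹ ((f ^ (-n)) z))) := rfl
      rw [e1, hfz (-n) z, AffineEquiv.inv_def, hfinv, hg, hfz n]
      have hβ : α ^ (-n : ℤ) = (α ^ n)⁻¹ := zpow_neg α n
      have hβne : α ^ n ≠ 0 := zpow_ne_zero n hαne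
      rw [hβ, hv]
      field_simp
      ring
  have horb : ∀ s : ℂ, s ∈ AddSubgroup.closure (Set.range fun n : ℤ => α ^ n * v) →
      ∃ h ∈ Gc, ∀ z : ℂ, h z = z + s := by
    intro s hs
    let K : AddSubgroup ℂ :=
      { carrier := {s : ℂ | ∃ h ∈ Gc, ∀ z : ℂ, h z = z + s}
        zero_mem' := ⟨1, one_mem _, fun z => by simp⟩
        add_mem' := by
          rintro x y ⟨h₁, hm₁, he₁⟩ ⟨h₂, hm₂, he₂⟩
          refine ⟨h₁ * h₂, mul_mem hm₁ hm₂, fun z => ?_⟩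
          rw [happ, he₂, he₁]
          ring
        neg_mem' := by
          rintro x ⟨h, hm, he⟩
          refine ⟨h⁻¹, inv_mem hm, fun z => ?_⟩
          have h1 : h (h⁻¹ z) = z := by
            rw [AffineEquiv.inv_def]; exact h.apply_symm_apply z
          have h2 := he (h⁻¹ z)
          rw [h1] at h2
          linear_combination -h2 }
    have hle : AddSubgroup.closure (Set.range fun n : ℤ => α ^ n * v) ≤ K :=
      (AddSubgroup.closure_le K).mpr (by rintro _ ⟨n, rfl⟩; exact hgen n)
    exact hle hs
  have hdense := aux_denseT θ hθ v hvne
  rw [← hα] at hdense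
  intro x
  have hx : x - a ∈ closure ((AddSubgroup.closure
      (Set.range fun n : ℤ => α ^ n * v) : AddSubgroup ℂ) : Set ℂ) := hdense _
  have hmap : Set.MapsTo (fun s : ℂ => a + s)
      ((AddSubgroup.closure (Set.range fun n : ℤ => α ^ n * v) : AddSubgroup ℂ) : Set ℂ)
      {w : ℂ | ∃ h ∈ Gc, h a = w} := by
    intro s hs
    obtain ⟨h, hm, he⟩ := horb s hs
    exact ⟨h, hm, he a⟩
  have hmem := map_mem_closure (by fun_prop) hx hmap
  have : a + (x - a) = x := by ring
  rwa [this] at hmem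
end

section
/- Let θ = π/2 (or more generally θ ∈ π/2 + πℤ), a ∈ ℂ*, and let G be the group generated by h(z) = e^{iθ}z and f(z) = e^{iθ}(z−a)+a. Then the lattice ℤ(1−e^{−iθ})a + ℤ(1−e^{iθ})a is invariant under both h and f, and hence G(0) ⊆ ℤ(1−e^{−iθ})a + ℤ(1−e^{iθ})a; in particular every orbit of G is discrete. -/
open Filter Metric in
private lemma stmt15_isolated {s : Set ℂ} (hd : DiscreteTopology s) (hc : IsClosed s) (v : ℂ) :
    ∃ ε > 0, ∀ w ∈ s, dist w v < ε → w = v := by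
  by_cases hv : v ∈ s
  · have h2 := (discreteTopology_subtype_iff.mp hd) v hv
    rw [inf_principal_eq_bot] at h2
    obtain ⟨U, hUo, hvU, hU⟩ := mem_nhdsWithin.mp h2
    obtain ⟨ε, hε, hball⟩ := Metric.isOpen_iff.mp hUo v hvU
    refine ⟨ε, hε, fun w hw hd' => ?_⟩
    by_contra hne
    exact (hU ⟨hball (by simpa [Metric.mem_ball] using hd'), hne⟩) hw
  · obtain ⟨ε, hε, hball⟩ := Metric.isOpen_iff.mp hc.isOpen_compl v hv
    refine ⟨ε, hε, fun w hw hd' => absurd hw ?_⟩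
    exact hball (by simpa [Metric.mem_ball] using hd')

open Filter Metric in
private lemma stmt15_discrete {s : Set ℂ}
    (H : ∀ x ∈ s, ∃ ε > 0, ∀ y ∈ s, dist y x < ε → y = x) : DiscreteTopology s := by
  rw [discreteTopology_subtype_iff]
  intro x hx
  obtain ⟨ε, hε, h⟩ := H x hx
  rw [inf_principal_eq_bot]
  refine mem_nhdsWithin.mpr ⟨Metric.ball x ε, Metric.isOpen_ball, Metric.mem_ball_self hε, ?_⟩
  rintro y ⟨hy, hy'⟩ hys
  exact hy' (h y hys (by simpa [Metric.mem_ball] using hy))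

/-- For θ ∈ π/2 + πℤ, a ∈ ℂ*, and G generated by h(z) = e^{iθ}z and
f(z) = e^{iθ}(z−a)+a, the lattice L = ℤ(1−e^{−iθ})a + ℤ(1−e^{iθ})a is invariant
under h and f, so G(0) ⊆ L; in particular every orbit of G is discrete. -/
theorem stmt15 (θ : ℝ) (hθ : ∃ k : ℤ, θ = Real.pi / 2 + k * Real.pi)
    (a : ℂ) (ha : a ≠ 0) (h f : ℂ ≃ᵃ[ℂ] ℂ)
    (hh : ∀ z, h z = Complex.exp (θ * Complex.I) * z)
    (hf : ∀ z, f z = Complex.exp (θ * Complex.I) * (z - a) + a) :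
    let L : Set ℂ := {w | ∃ n m : ℤ,
      w = n • ((1 - Complex.exp (-θ * Complex.I)) * a)
        + m • ((1 - Complex.exp (θ * Complex.I)) * a)}
    (∀ z ∈ L, h z ∈ L ∧ f z ∈ L) ∧
    {w : ℂ | ∃ g ∈ Subgroup.closure {h, f}, g 0 = w} ⊆ L ∧
    ∀ z : ℂ, DiscreteTopology {w : ℂ // ∃ g ∈ Subgroup.closure {h, f}, g z = w} := by
  intro L
  obtain ⟨k₀, hk₀⟩ := hθ
  set u : ℂ := Complex.exp (θ * Complex.I) with hu_def
  have hu0 : u ≠ 0 := Complex.exp_ne_zero _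
  have hu2 : u ^ 2 = -1 := by
    rw [hu_def, sq, ← Complex.exp_add]
    have harg : ((θ : ℂ) * Complex.I + (θ : ℂ) * Complex.I : ℂ)
        = (Real.pi : ℂ) * Complex.I + (k₀ : ℂ) * (2 * (Real.pi : ℂ) * Complex.I) := by
      rw [hk₀]; push_cast; ring
    rw [harg, Complex.exp_add, Complex.exp_pi_mul_I, Complex.exp_int_mul_two_pi_mul_I]
    ring
  have hinv : u⁻¹ = -u := by
    have hmul : u * (-u) = 1 := by linear_combination -hu2
    exact inv_eq_of_mul_eq_one_right hmul
  have hneg : Complex.exp (-θ * Complex.I) = -u := by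
    rw [show -(θ : ℂ) * Complex.I = -((θ : ℝ) * Complex.I) by ring,
      Complex.exp_neg, ← hu_def, hinv]
  -- description of L
  have hLiff : ∀ w : ℂ, w ∈ L ↔
      ∃ n m : ℤ, w = (n : ℂ) * ((1 + u) * a) + (m : ℂ) * ((1 - u) * a) := by
    intro w
    constructor
    · rintro ⟨n, m, rfl⟩
      exact ⟨n, m, by rw [hneg]; push_cast [zsmul_eq_mul]; ring⟩
    · rintro ⟨n, m, rfl⟩
      exact ⟨n, m, by rw [hneg]; push_cast [zsmul_eq_mul]; ring⟩
  -- multiplication by u and u⁻¹ on the lattice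
  have mulu : ∀ n m : ℤ, u * ((n : ℂ) * ((1 + u) * a) + (m : ℂ) * ((1 - u) * a))
      = ((m : ℤ) : ℂ) * ((1 + u) * a) + ((-n : ℤ) : ℂ) * ((1 - u) * a) := by
    intro n m; push_cast
    linear_combination ((n : ℂ) - m) * a * hu2
  have mulnu : ∀ n m : ℤ, (-u) * ((n : ℂ) * ((1 + u) * a) + (m : ℂ) * ((1 - u) * a))
      = ((-m : ℤ) : ℂ) * ((1 + u) * a) + ((n : ℤ) : ℂ) * ((1 - u) * a) := by
    intro n m; push_cast
    linear_combination ((m : ℂ) - n) * a * hu2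
  have key : ∀ (kk : ℤ) (n m : ℤ), ∃ n' m' : ℤ,
      u ^ kk * ((n : ℂ) * ((1 + u) * a) + (m : ℂ) * ((1 - u) * a))
        = (n' : ℂ) * ((1 + u) * a) + (m' : ℂ) * ((1 - u) * a) := by
    intro kk
    induction kk using Int.induction_on with
    | zero => exact fun n m => ⟨n, m, by simp⟩
    | succ j ih =>
      intro n m
      obtain ⟨n2, m2, h2⟩ := ih m (-n)
      exact ⟨n2, m2, by rw [zpow_add_one₀ hu0, mul_assoc, mulu, h2]⟩
    | pred j ih =>
      intro n m
      obtain ⟨n2, m2, h2⟩ := ih (-m) n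
      refine ⟨n2, m2, ?_⟩
      rw [zpow_sub_one₀ hu0, hinv, mul_assoc]
      rw [show -u * ((n : ℂ) * ((1 + u) * a) + (m : ℂ) * ((1 - u) * a))
        = ((-m : ℤ) : ℂ) * ((1 + u) * a) + ((n : ℤ) : ℂ) * ((1 - u) * a) from mulnu n m, h2]
  have hvals : ∀ kk : ℤ, u ^ kk = 1 ∨ u ^ kk = u ∨ u ^ kk = -1 ∨ u ^ kk = -u := by
    intro kk
    induction kk using Int.induction_on with
    | zero => left; simp
    | succ j ih =>
      rcases ih with h' | h' | h' | h'
      · right; left; rw [zpow_add_one₀ hu0, h', one_mul]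
      · right; right; left; rw [zpow_add_one₀ hu0, h', ← sq, hu2]
      · right; right; right; rw [zpow_add_one₀ hu0, h']; ring
      · left; rw [zpow_add_one₀ hu0, h']; linear_combination -hu2
    | pred j ih =>
      rcases ih with h' | h' | h' | h'
      · right; right; right; rw [zpow_sub_one₀ hu0, h', hinv]; ring
      · left; rw [zpow_sub_one₀ hu0, h', hinv]; linear_combination -hu2
      · right; left; rw [zpow_sub_one₀ hu0, h', hinv]; ring
      · right; right; left; rw [zpow_sub_one₀ hu0, h', hinv]; linear_combination hu2
  -- the structural subgroup
  set S : Subgroup (ℂ ≃ᵃ[ℂ] ℂ) :=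
    { carrier := {g | ∃ kk n m : ℤ, ∀ z : ℂ,
        g z = u ^ kk * z + ((n : ℂ) * ((1 + u) * a) + (m : ℂ) * ((1 - u) * a))}
      one_mem' := ⟨0, 0, 0, fun z => by simp⟩
      mul_mem' := by
        rintro g g' ⟨k1, n1, m1, hg⟩ ⟨k2, n2, m2, hg'⟩
        obtain ⟨n3, m3, h3⟩ := key k1 n2 m2
        refine ⟨k1 + k2, n1 + n3, m1 + m3, fun z => ?_⟩
        have hco : (g * g') z = g (g' z) := rfl
        rw [hco, hg', hg, zpow_add₀ hu0]
        push_cast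
        linear_combination h3
      inv_mem' := by
        rintro g ⟨k1, n1, m1, hg⟩
        obtain ⟨n2, m2, h2⟩ := key (-k1) n1 m1
        refine ⟨-k1, -n2, -m2, fun z => ?_⟩
        have hone : u ^ k1 * u ^ (-k1) = 1 := by
          rw [← zpow_add₀ hu0, add_neg_cancel, zpow_zero]
        have hgz : g (u ^ (-k1) * z + (((-n2 : ℤ) : ℂ) * ((1 + u) * a)
            + ((-m2 : ℤ) : ℂ) * ((1 - u) * a))) = z := by
          rw [hg]
          push_cast
          linear_combination (z - ((n1 : ℂ) * ((1 + u) * a) + (m1 : ℂ) * ((1 - u) * a))) * hone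
            + u ^ k1 * h2
        have : (g⁻¹ : ℂ ≃ᵃ[ℂ] ℂ) z = u ^ (-k1) * z + (((-n2 : ℤ) : ℂ) * ((1 + u) * a)
            + ((-m2 : ℤ) : ℂ) * ((1 - u) * a)) := by
          conv_lhs => rw [show (g⁻¹ : ℂ ≃ᵃ[ℂ] ℂ) z = g.symm z from rfl, ← hgz,
            AffineEquiv.symm_apply_apply]
        rw [this] } with hS_def
  have hhS : h ∈ S := ⟨1, 0, 0, fun z => by rw [hh z, zpow_one]; push_cast; ring⟩
  have hfS : f ∈ S := ⟨1, 0, 1, fun z => by rw [hf z, zpow_one]; push_cast; ring⟩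
  have hcl : Subgroup.closure {h, f} ≤ S := by
    rw [Subgroup.closure_le]
    rintro g (rfl | rfl)
    · exact hhS
    · exact hfS
  refine ⟨?_, ?_, ?_⟩
  · -- part 1
    intro z hz
    obtain ⟨n, m, rfl⟩ := (hLiff z).mp hz
    constructor
    · exact (hLiff _).mpr ⟨m, -n, by rw [hh, mulu]⟩
    · refine (hLiff _).mpr ⟨m, -n + 1, ?_⟩
      rw [hf]
      have hmu := mulu n m
      push_cast at hmu ⊢
      linear_combination hmu
  · -- part 2
    rintro w ⟨g, hg, hgz⟩
    obtain ⟨kk, n, m, hrep⟩ := hcl hg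
    refine (hLiff w).mpr ⟨n, m, ?_⟩
    rw [← hgz, hrep 0, mul_zero, zero_add]
  · -- part 3
    intro z
    have hQ0 : (1 - u) * a ≠ 0 := by
      refine mul_ne_zero (fun h0 => ?_) ha
      have hu1 : u = 1 := by linear_combination -h0
      rw [hu1] at hu2; norm_num at hu2
    have li : LinearIndependent ℝ ![(1 + u) * a, (1 - u) * a] := by
      refine linearIndependent_fin2.mpr ⟨?_, fun s hs => ?_⟩
      · simpa using hQ0
      · simp only [Matrix.cons_val_one, Matrix.head_cons, Matrix.cons_val_zero] at hs
        rw [Complex.real_smul] at hs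
        have h2 : (s : ℂ) * (1 - u) = 1 + u := mul_right_cancel₀ ha (by linear_combination hs)
        have h3 : (s : ℂ) ^ 2 = -1 := by
          linear_combination (-(1 : ℂ) + u + s + s * u) / 2 * h2 + ((1 + (s : ℂ)) ^ 2) / 2 * hu2
        have h4 : s ^ 2 = (-1 : ℝ) := by exact_mod_cast h3
        nlinarith [sq_nonneg s]
    have hcard : Fintype.card (Fin 2) = Module.finrank ℝ ℂ := by
      simp [Complex.finrank_real_complex]
    let b : Module.Basis (Fin 2) ℝ ℂ := basisOfLinearIndependentOfCardEqFinrank li hcard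
    have hbP : (1 + u) * a ∈ Set.range ⇑b :=
      ⟨0, by rw [show ⇑b = ![(1 + u) * a, (1 - u) * a] from
        coe_basisOfLinearIndependentOfCardEqFinrank li hcard]; rfl⟩
    have hbQ : (1 - u) * a ∈ Set.range ⇑b :=
      ⟨1, by rw [show ⇑b = ![(1 + u) * a, (1 - u) * a] from
        coe_basisOfLinearIndependentOfCardEqFinrank li hcard]; rfl⟩
    have hmemL : ∀ n m : ℤ, (n : ℂ) * ((1 + u) * a) + (m : ℂ) * ((1 - u) * a)
        ∈ Submodule.span ℤ (Set.range ⇑b) := by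
      intro n m
      have h1 := Submodule.smul_mem (Submodule.span ℤ (Set.range ⇑b)) n
        (Submodule.subset_span hbP)
      have h2 := Submodule.smul_mem (Submodule.span ℤ (Set.range ⇑b)) m
        (Submodule.subset_span hbQ)
      simpa [zsmul_eq_mul] using Submodule.add_mem _ h1 h2
    have hclosed : IsClosed ((Submodule.span ℤ (Set.range ⇑b) : Submodule ℤ ℂ) : Set ℂ) := by
      have := AddSubgroup.isClosed_of_discrete
        (H := (Submodule.span ℤ (Set.range ⇑b) : Submodule ℤ ℂ).toAddSubgroup)
      simpa using this
    have hdisc : DiscreteTopology ((Submodule.span ℤ (Set.range ⇑b) : Submodule ℤ ℂ) : Set ℂ) := by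
      have hi : DiscreteTopology (Submodule.span ℤ (Set.range ⇑b) : Submodule ℤ ℂ) := inferInstance
      exact hi
    have master : ∀ v : ℂ, ∃ ε > 0,
        ∀ w ∈ ((Submodule.span ℤ (Set.range ⇑b) : Submodule ℤ ℂ) : Set ℂ),
          dist w v < ε → w = v :=
      fun v => stmt15_isolated hdisc hclosed v
    have hsub : {w : ℂ | ∃ g ∈ Subgroup.closure {h, f}, g z = w} ⊆
        {w : ℂ | ∃ c, (c = 1 ∨ c = u ∨ c = -1 ∨ c = -u) ∧
          ∃ lam ∈ ((Submodule.span ℤ (Set.range ⇑b) : Submodule ℤ ℂ) : Set ℂ),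
            w = c * z + lam} := by
      rintro w ⟨g, hg, hgz⟩
      obtain ⟨kk, n, m, hrep⟩ := hcl hg
      exact ⟨u ^ kk, hvals kk, _, hmemL n m, by rw [← hgz, hrep z]⟩
    have hTdisc : DiscreteTopology ↥{w : ℂ | ∃ c, (c = 1 ∨ c = u ∨ c = -1 ∨ c = -u) ∧
        ∃ lam ∈ ((Submodule.span ℤ (Set.range ⇑b) : Submodule ℤ ℂ) : Set ℂ),
          w = c * z + lam} := by
      apply stmt15_discrete
      intro x hx
      obtain ⟨ε₁, hε₁, H₁⟩ := master (x - 1 * z)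
      obtain ⟨ε₂, hε₂, H₂⟩ := master (x - u * z)
      obtain ⟨ε₃, hε₃, H₃⟩ := master (x - (-1) * z)
      obtain ⟨ε₄, hε₄, H₄⟩ := master (x - (-u) * z)
      refine ⟨min (min ε₁ ε₂) (min ε₃ ε₄), lt_min (lt_min hε₁ hε₂) (lt_min hε₃ hε₄), ?_⟩
      have step : ∀ (c : ℂ) (ε : ℝ),
          (∀ w ∈ ((Submodule.span ℤ (Set.range ⇑b) : Submodule ℤ ℂ) : Set ℂ),
            dist w (x - c * z) < ε → w = x - c * z) →
          ∀ lam ∈ ((Submodule.span ℤ (Set.range ⇑b) : Submodule ℤ ℂ) : Set ℂ),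
            dist (c * z + lam) x < ε → c * z + lam = x := by
        intro c ε H lam hlam hd
        have h' : dist lam (x - c * z) < ε := by
          rwa [dist_eq_norm, show lam - (x - c * z) = c * z + lam - x by ring, ← dist_eq_norm]
        rw [H lam hlam h']; ring
      rintro y ⟨c, hc, lam, hlam, rfl⟩ hdist
      rcases hc with rfl | rfl | rfl | rfl
      · exact step 1 ε₁ H₁ lam hlam (hdist.trans_le ((min_le_left _ _).trans (min_le_left _ _)))
      · exact step u ε₂ H₂ lam hlam (hdist.trans_le ((min_le_left _ _).trans (min_le_right _ _)))
      · exact step (-1) ε₃ H₃ lam hlam (hdist.trans_le ((min_le_right _ _).trans (min_le_left _ _)))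
      · exact step (-u) ε₄ H₄ lam hlam (hdist.trans_le ((min_le_right _ _).trans (min_le_right _ _)))
    exact DiscreteTopology.of_subset hTdisc hsub
end

section
/- Let G be the group generated by h(z) = λz and f(z) = λ(z−a)+a on ℂ with a ≠ 0 and λ ∈ ℂ∖ℝ. If the set G₁(0) of translation vectors occurring in G is discrete, then it contains a lattice ℤa₁ + ℤa₂ with (a₁, a₂) an ℝ-basis of ℂ, and hence G₁(0) itself is a full-rank lattice. -/
open Submodule Module

set_option maxHeartbeats 1000000 in
set_option synthInstance.maxHeartbeats 400000 in
/-- For G generated by h(z) = λz and f(z) = λ(z−a)+a on ℂ with a ≠ 0, λ ∉ ℝ: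
if the set G₁(0) of translation vectors occurring in G is discrete, then it contains
a full-rank lattice ℤa₁ + ℤa₂ and is itself a full-rank lattice. -/
theorem stmt16 (lam : ℂ) (hlam : lam.im ≠ 0) (a : ℂ) (ha : a ≠ 0)
    (h f : ℂ ≃ᵃ[ℂ] ℂ) (hh : ∀ z, h z = lam * z) (hf : ∀ z, f z = lam * (z - a) + a)
    (S : Set ℂ) (hS : S = {c | ∃ T ∈ Subgroup.closure {h, f}, ∀ z : ℂ, T z = z + c})
    (hdisc : DiscreteTopology S) :
    (∃ a₁ a₂ : ℂ, LinearIndependent ℝ ![a₁, a₂] ∧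
      {w : ℂ | ∃ n m : ℤ, w = n • a₁ + m • a₂} ⊆ S) ∧
    (∃ b₁ b₂ : ℂ, LinearIndependent ℝ ![b₁, b₂] ∧
      S = {w : ℂ | ∃ n m : ℤ, w = n • b₁ + m • b₂}) := by
  have hlam0 : lam ≠ 0 := by intro h0; simp [h0] at hlam
  have hlam1 : lam ≠ 1 := by intro h1; simp [h1] at hlam
  have hmem : h ∈ Subgroup.closure {h, f} := Subgroup.subset_closure (by simp)
  have fmem : f ∈ Subgroup.closure {h, f} := Subgroup.subset_closure (by simp)
  have hinv : ∀ z : ℂ, h⁻¹ z = lam⁻¹ * z := by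
    intro z
    have h1 : h (h⁻¹ z) = z := by
      rw [AffineEquiv.inv_def]; exact h.apply_symm_apply z
    rw [hh] at h1
    have h2 : lam⁻¹ * (lam * h⁻¹ z) = lam⁻¹ * z := by rw [h1]
    rwa [inv_mul_cancel_left₀ hlam0] at h2
  -- S is an additive subgroup
  have hSzero : (0:ℂ) ∈ S := by
    rw [hS]; exact ⟨1, one_mem _, fun z => by simp [AffineEquiv.coe_one]⟩
  have hSadd : ∀ {c d : ℂ}, c ∈ S → d ∈ S → c + d ∈ S := by
    rw [hS]
    rintro c d ⟨T, hT, hTe⟩ ⟨T', hT', hTe'⟩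
    exact ⟨T * T', mul_mem hT hT', fun z => by
      rw [AffineEquiv.mul_def, AffineEquiv.trans_apply, hTe', hTe, add_assoc, add_comm d c]⟩
  have hSneg : ∀ {c : ℂ}, c ∈ S → -c ∈ S := by
    rw [hS]
    rintro c ⟨T, hT, hTe⟩
    refine ⟨T⁻¹, inv_mem hT, fun z => ?_⟩
    apply T.injective
    have : T (T⁻¹ z) = z := by
      rw [AffineEquiv.inv_def]; exact T.apply_symm_apply z
    rw [this, hTe]; ring
  -- two independent vectors in S
  set c₁ : ℂ := (1 - lam) * a with hc₁
  have hc₁S : c₁ ∈ S := by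
    rw [hS]
    refine ⟨f * h⁻¹, mul_mem fmem (inv_mem hmem), fun z => ?_⟩
    rw [AffineEquiv.mul_def, AffineEquiv.trans_apply, hinv, hf]
    field_simp; ring
  have hc₂S : lam * c₁ ∈ S := by
    rw [hS] at hc₁S ⊢
    obtain ⟨T, hT, hTe⟩ := hc₁S
    refine ⟨h * T * h⁻¹, mul_mem (mul_mem hmem hT) (inv_mem hmem), fun z => ?_⟩
    rw [AffineEquiv.mul_def, AffineEquiv.mul_def, AffineEquiv.trans_apply,
      AffineEquiv.trans_apply, hinv, hTe, hh]
    field_simp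
  have hc₁0 : c₁ ≠ 0 := by
    rw [hc₁]
    exact mul_ne_zero (sub_ne_zero.2 fun e => hlam1 e.symm) ha
  have hind : LinearIndependent ℝ ![c₁, lam * c₁] := by
    rw [LinearIndependent.pair_iff]
    intro s t hst
    have key : ((s : ℂ) + t * lam) * c₁ = 0 := by
      rw [← hst]; simp only [Complex.real_smul]; ring
    have h0 : (s : ℂ) + t * lam = 0 := by
      rcases mul_eq_zero.1 key with h' | h'
      · exact h'
      · exact absurd h' hc₁0
    have him : t * lam.im = 0 := by
      have := congrArg Complex.im h0
      simpa using this
    have ht : t = 0 := by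
      rcases mul_eq_zero.1 him with h' | h'
      · exact h'
      · exact absurd h' hlam
    have hs : s = 0 := by
      have := congrArg Complex.re h0
      simpa [ht] using this
    exact ⟨hs, ht⟩
  -- the submodule
  set G1 : AddSubgroup ℂ :=
    { carrier := S
      add_mem' := hSadd
      zero_mem' := hSzero
      neg_mem' := hSneg } with hG1
  set L : Submodule ℤ ℂ := AddSubgroup.toIntSubmodule G1 with hL
  have hLS : (L : Set ℂ) = S := rfl
  have hsub : ∀ w : ℂ, (∃ n m : ℤ, w = n • c₁ + m • (lam * c₁)) → w ∈ S := by
    rintro w ⟨n, m, rfl⟩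
    exact hSadd (G1.zsmul_mem hc₁S n) (G1.zsmul_mem hc₂S m)
  refine ⟨⟨c₁, lam * c₁, hind, hsub⟩, ?_⟩
  -- second part: S is a full-rank lattice
  have hdiscL : DiscreteTopology L := hdisc
  haveI := hdiscL
  have hcard : Fintype.card (Fin 2) = finrank ℝ ℂ := by
    simp [Complex.finrank_real_complex]
  let bC : Basis (Fin 2) ℝ ℂ := basisOfLinearIndependentOfCardEqFinrank hind hcard
  have hbC : ∀ i, bC i = ![c₁, lam * c₁] i := fun i =>
    coe_basisOfLinearIndependentOfCardEqFinrank hind hcard ▸ rfl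
  haveI : IsZLattice ℝ L := by
    constructor
    rw [eq_top_iff, ← bC.span_eq]
    apply span_mono
    rintro x ⟨i, rfl⟩
    rw [hbC]
    fin_cases i
    · exact hc₁S
    · exact hc₂S
  haveI : Module.Free ℤ L := ZLattice.module_free ℝ L
  have hrank : finrank ℤ L = 2 := by
    rw [ZLattice.rank ℝ L, Complex.finrank_real_complex]
  let b0 := Module.Free.chooseBasis ℤ L
  have hcard2 : Fintype.card (Module.Free.ChooseBasisIndex ℤ L) = 2 := by
    rw [← finrank_eq_card_chooseBasisIndex, hrank]
  let e : Module.Free.ChooseBasisIndex ℤ L ≃ Fin 2 :=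
    Fintype.equivFinOfCardEq hcard2
  let b : Basis (Fin 2) ℤ L := b0.reindex e
  let bR : Basis (Fin 2) ℝ ℂ := b.ofZLatticeBasis ℝ L
  refine ⟨(b 0 : ℂ), (b 1 : ℂ), ?_, ?_⟩
  · have : ![(b 0 : ℂ), (b 1 : ℂ)] = ⇑bR := by
      funext i
      fin_cases i <;> simp [bR, Basis.ofZLatticeBasis_apply]
    rw [this]
    exact bR.linearIndependent
  · ext w
    simp only [Set.mem_setOf_eq]
    constructor
    · intro hw
      have hwL : w ∈ L := hw
      refine ⟨b.repr ⟨w, hwL⟩ 0, b.repr ⟨w, hwL⟩ 1, ?_⟩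
      have := b.sum_repr ⟨w, hwL⟩
      rw [Fin.sum_univ_two] at this
      have := congrArg (Subtype.val) this
      push_cast at this
      exact this.symm
    · rintro ⟨n, m, rfl⟩
      have h0 : ((b 0 : L) : ℂ) ∈ S := (b 0).2
      have h1 : ((b 1 : L) : ℂ) ∈ S := (b 1).2
      exact hSadd (G1.zsmul_mem h0 n) (G1.zsmul_mem h1 m)
end
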